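/- For the Yule-Ornstein-Uhlenbeck model on the Yule n-tree with constant jump probability p, the expected value of Ψ^{(n)} = Σ_{i=1}^{υ^{(n)}} J̃_i exp(-2α(τ^{(n)} + T_{Ĩ_i +1} + ⋯)) satisfies, for α ≠ 1/2: E[Ψ^{(n)}] = (p/α)·(2 - (2α+1)(2αn - 2α + 2)b_{n,2α})/((n-1)(2α-1)), where b_{n,2α} = ∏_{k=1}^n k/(k+2α). In particular n·E[Ψ^{(n)}] → 2p/(α(2α-1)) when α > 1/2. -/

import Mathlib

open scoped BigOperators
open Filter

/-- `b n x = ∏_{k=1}^n k/(k+x)`. -/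
noncomputable def b (n : ℕ) (x : ℝ) : ℝ := ∏ k ∈ Finset.Icc 1 n, (k : ℝ) / (k + x)

/-- `π_{n,k} = 2(n+1)/((n-1)(k+1)(k+2))`. -/
noncomputable def piYule (n k : ℕ) : ℝ :=
  2 * ((n : ℝ) + 1) / (((n : ℝ) - 1) * ((k : ℝ) + 1) * ((k : ℝ) + 2))

/-- `E[Ψ^{(n)}] = Σ_{k=1}^{n-1} π_{n,k} Σ_{i=1}^{k-1} (2p/(i+1))·b_{n,2α}/b_{i,2α}`:
the expectation of `Ψ^{(n)} = Σ_{i=1}^{υ^{(n)}} J̃_i e^{-2α(time from the i-th common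
speciation event to the present)}` for a uniformly sampled pair of tips of the Yule n-tree
with constant jump probability p. -/
noncomputable def EPsi (α p : ℝ) (n : ℕ) : ℝ :=
  ∑ k ∈ Finset.Icc 1 (n - 1), piYule n k *
    ∑ i ∈ Finset.Icc 1 (k - 1), (2 * p / ((i : ℝ) + 1)) * (b n (2 * α) / b i (2 * α))

lemma b_zero' (x : ℝ) : b 0 x = 1 := by simp [b]

lemma b_succ (n : ℕ) (x : ℝ) :
    b (n + 1) x = b n x * (((n : ℝ) + 1) / (((n : ℝ) + 1) + x)) := by
  rw [b, b, Finset.prod_Icc_succ_top (Nat.le_add_left 1 n)]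
  push_cast; ring

lemma b_pos (n : ℕ) {x : ℝ} (hx : 0 < x) : 0 < b n x := by
  refine Finset.prod_pos fun k hk => ?_
  have h1 : (1 : ℕ) ≤ k := (Finset.mem_Icc.mp hk).1
  have : (0:ℝ) < k := by exact_mod_cast h1
  exact div_pos this (by linarith)

lemma b_shift (n : ℕ) {x : ℝ} (hx : 0 < x) :
    b n x * ((n : ℝ) + x) = x * b n (x - 1) := by
  induction n with
  | zero => simp [b_zero']
  | succ n ih =>
    have h1 : ((n : ℝ) + 1) + x ≠ 0 := by positivity
    have h2 : (n : ℝ) + x ≠ 0 := by positivity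
    rw [b_succ, b_succ]
    push_cast
    field_simp
    have e : (n:ℝ) + 1 + (x - 1) = n + x := by ring
    rw [e]
    field_simp
    linear_combination ih

lemma sumT {x : ℝ} (hx : 0 < x) (m : ℕ) :
    ∑ i ∈ Finset.Icc 1 m, 1 / (((i:ℝ) + 1) * b i x)
      = ((m:ℝ) + x + 1) / (x * ((m:ℝ) + 1) * b m x) - (x + 1) / x := by
  induction m with
  | zero =>
    simp [b_zero']
  | succ m ih =>
    rw [Finset.sum_Icc_succ_top (by omega : 1 ≤ m + 1), ih, b_succ]
    have hb : b m x ≠ 0 := (b_pos m hx).ne'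
    have h1 : ((m:ℝ) + 1) + x ≠ 0 := by positivity
    have h2 : (m:ℝ) + 1 ≠ 0 := by positivity
    have h3 : (m:ℝ) + 2 ≠ 0 := by positivity
    push_cast
    field_simp
    ring

lemma keySum {x : ℝ} (hx : 0 < x) (hx1 : x ≠ 1) (m : ℕ) :
    ∑ k ∈ Finset.Icc 1 m, (1 / (((k:ℝ) + 1) * ((k:ℝ) + 2))) *
        (∑ i ∈ Finset.Icc 1 (k - 1), 1 / (((i:ℝ) + 1) * b i x))
      = ((m:ℝ) + x + 1) / (x * (x - 1) * ((m:ℝ) + 1) * ((m:ℝ) + 2) * b m x)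
        - (x + 1) / (2 * x * (x - 1)) - (x + 1) * (m:ℝ) / (2 * x * ((m:ℝ) + 2)) := by
  have hx0 : x ≠ 0 := hx.ne'
  have hx1' : x - 1 ≠ 0 := sub_ne_zero.mpr hx1
  induction m with
  | zero =>
    rw [b_zero']
    norm_num
    field_simp
    ring
  | succ m ih =>
    rw [Finset.sum_Icc_succ_top (by omega : 1 ≤ m + 1), ih]
    have : (m + 1 - 1) = m := by omega
    rw [this, sumT hx, b_succ]
    have hb : b m x ≠ 0 := (b_pos m hx).ne'
    have h1 : ((m:ℝ) + 1) + x ≠ 0 := by positivity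
    have h2 : (m:ℝ) + 1 ≠ 0 := by positivity
    have h3 : (m:ℝ) + 2 ≠ 0 := by positivity
    have h4 : (m:ℝ) + 3 ≠ 0 := by positivity
    push_cast
    field_simp
    ring

lemma EPsi_closed {α : ℝ} (p : ℝ) (hα : 0 < α) (hne : α ≠ 1 / 2) {n : ℕ} (hn : 2 ≤ n) :
    EPsi α p n =
      (p / α) * ((2 - (2 * α + 1) * (2 * α * (n : ℝ) - 2 * α + 2) * b n (2 * α)) /
        (((n : ℝ) - 1) * (2 * α - 1))) := by
  set x := 2 * α with hxdef
  have hx : 0 < x := by positivity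
  have hx1 : x ≠ 1 := by
    simp only [hxdef]; intro h; exact hne (by linarith)
  have hx1' : x - 1 ≠ 0 := sub_ne_zero.mpr hx1
  have hx0 : x ≠ 0 := hx.ne'
  have hbn : b n x ≠ 0 := (b_pos n hx).ne'
  have hn1 : (1:ℝ) ≤ (n:ℝ) - 1 := by
    have : (2:ℝ) ≤ (n:ℝ) := by exact_mod_cast hn
    linarith
  have hnn : ((n:ℝ) - 1) ≠ 0 := by linarith
  have step1 : EPsi α p n
      = (4 * p * ((n:ℝ) + 1) * b n x / ((n:ℝ) - 1)) *
        ∑ k ∈ Finset.Icc 1 (n - 1), (1 / (((k:ℝ) + 1) * ((k:ℝ) + 2))) *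
          (∑ i ∈ Finset.Icc 1 (k - 1), 1 / (((i:ℝ) + 1) * b i x)) := by
    rw [EPsi, Finset.mul_sum]
    refine Finset.sum_congr rfl fun k _ => ?_
    simp only [piYule, Finset.mul_sum]
    rw [← hxdef]
    refine Finset.sum_congr rfl fun i _ => ?_
    have hbi : b i x ≠ 0 := (b_pos i hx).ne'
    have h2 : (i:ℝ) + 1 ≠ 0 := by positivity
    have h3 : (k:ℝ) + 1 ≠ 0 := by positivity
    have h4 : (k:ℝ) + 2 ≠ 0 := by positivity
    field_simp
    ring
  rw [step1, keySum hx hx1]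
  have hb' : b n x = b (n - 1) x * ((((n-1:ℕ):ℝ) + 1) / ((((n-1:ℕ):ℝ) + 1) + x)) := by
    have : n - 1 + 1 = n := by omega
    conv_lhs => rw [← this]
    exact b_succ (n - 1) x
  have hcast : ((n - 1 : ℕ) : ℝ) = (n:ℝ) - 1 := by
    have : (1:ℕ) ≤ n := by omega
    push_cast [this]; ring
  rw [hcast] at hb'
  have hbn1 : b (n - 1) x ≠ 0 := (b_pos (n-1) hx).ne'
  have h5 : (n:ℝ) - 1 + 1 ≠ 0 := by linarith
  have h6 : (n:ℝ) - 1 + 1 + x ≠ 0 := by linarith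
  have h7 : (n:ℝ) - 1 + 2 ≠ 0 := by linarith
  rw [hcast, hb']
  field_simp
  ring

lemma b_le {y : ℝ} (hy : 0 < y) (hy1 : y ≤ 1) (n : ℕ) :
    b n y ≤ ((n : ℝ) + 1) ^ (-y) := by
  induction n with
  | zero => simp [b_zero']
  | succ n ih =>
    have hK0 : (0:ℝ) < (n:ℝ) + 1 := by positivity
    have hKy : (0:ℝ) < (n:ℝ) + 1 + y := by positivity
    have bern : (((n:ℝ) + 2) / ((n:ℝ) + 1)) ^ y ≤ ((n:ℝ) + 1 + y) / ((n:ℝ) + 1) := by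
      have h := rpow_one_add_le_one_add_mul_self
        (s := 1 / ((n:ℝ) + 1)) ((by norm_num : (-1:ℝ) ≤ 0).trans (by positivity)) hy.le hy1
      have e1 : (1 : ℝ) + 1 / ((n:ℝ) + 1) = ((n:ℝ) + 2) / ((n:ℝ) + 1) := by
        field_simp; ring
      have e2 : (1 : ℝ) + y * (1 / ((n:ℝ) + 1)) = ((n:ℝ) + 1 + y) / ((n:ℝ) + 1) := by
        field_simp
      rw [e1, e2] at h
      exact h
    have key2 : ((n:ℝ) + 1) / ((n:ℝ) + 1 + y) ≤ (((n:ℝ) + 2) / ((n:ℝ) + 1)) ^ (-y) := by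
      rw [Real.rpow_neg (by positivity)]
      rw [← one_div, le_div_iff₀ (by positivity)]
      calc ((n:ℝ) + 1) / ((n:ℝ) + 1 + y) * (((n:ℝ) + 2) / ((n:ℝ) + 1)) ^ y
          ≤ ((n:ℝ) + 1) / ((n:ℝ) + 1 + y) * (((n:ℝ) + 1 + y) / ((n:ℝ) + 1)) := by
            exact mul_le_mul_of_nonneg_left bern (by positivity)
        _ = 1 := by field_simp
    have hsplit : ((n:ℝ) + 1 + 1) ^ (-y)
        = ((n:ℝ) + 1) ^ (-y) * (((n:ℝ) + 2) / ((n:ℝ) + 1)) ^ (-y) := by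
      rw [← Real.mul_rpow (by positivity) (by positivity)]
      congr 1
      field_simp
      ring
    rw [b_succ]
    push_cast
    rw [hsplit]
    calc b n y * (((n:ℝ) + 1) / ((n:ℝ) + 1 + y))
        ≤ ((n:ℝ) + 1) ^ (-y) * (((n:ℝ) + 1) / ((n:ℝ) + 1 + y)) := by
          exact mul_le_mul_of_nonneg_right ih (by positivity)
      _ ≤ ((n:ℝ) + 1) ^ (-y) * (((n:ℝ) + 2) / ((n:ℝ) + 1)) ^ (-y) :=
          mul_le_mul_of_nonneg_left key2 (by positivity)

lemma b_anti {x y : ℝ} (hy : 0 < y) (hyx : y ≤ x) (n : ℕ) : b n x ≤ b n y := by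
  have hx0 : 0 < x := lt_of_lt_of_le hy hyx
  refine Finset.prod_le_prod (fun k hk => ?_) (fun k hk => ?_)
  · have h1 : (1 : ℕ) ≤ k := (Finset.mem_Icc.mp hk).1
    have hk0 : (0:ℝ) < k := by exact_mod_cast h1
    positivity
  · have h1 : (1 : ℕ) ≤ k := (Finset.mem_Icc.mp hk).1
    have hk0 : (0:ℝ) < k := by exact_mod_cast h1
    apply div_le_div_of_nonneg_left hk0.le (by linarith)
    linarith

lemma tendsto_b {y : ℝ} (hy : 0 < y) :
    Tendsto (fun n : ℕ => b n y) atTop (nhds 0) := by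
  set z := min y 1 with hz
  have hz0 : 0 < z := lt_min hy one_pos
  have hz1 : z ≤ 1 := min_le_right _ _
  have hzy : z ≤ y := min_le_left _ _
  have hb : Tendsto (fun n : ℕ => ((n : ℝ) + 1) ^ (-z)) atTop (nhds 0) := by
    have h1 : Tendsto (fun n : ℕ => (n : ℝ) + 1) atTop atTop :=
      tendsto_atTop_add_const_right atTop 1 tendsto_natCast_atTop_atTop
    exact (tendsto_rpow_neg_atTop hz0).comp h1
  refine squeeze_zero (fun n => (b_pos n hy).le) (fun n => ?_) hb
  exact (b_anti hz0 hzy n).trans (b_le hz0 hz1 n)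

lemma tendsto_nb {x : ℝ} (hx : 1 < x) :
    Tendsto (fun n : ℕ => (n : ℝ) * b n x) atTop (nhds 0) := by
  have hx0 : 0 < x := by linarith
  have hx1 : 0 < x - 1 := by linarith
  have hb : Tendsto (fun n : ℕ => x * b n (x - 1)) atTop (nhds 0) := by
    have := (tendsto_b hx1).const_mul x
    simpa using this
  refine squeeze_zero (fun n => ?_) (fun n => ?_) hb
  · have := b_pos n hx0
    positivity
  · have hs := b_shift n hx0
    nlinarith [b_pos n hx0, Nat.cast_nonneg (α := ℝ) n]

/-- For constant jump probability p and `α ≠ 1/2`,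
`E[Ψ^{(n)}] = (p/α)·(2 - (2α+1)(2αn - 2α + 2)b_{n,2α})/((n-1)(2α-1))`;
in particular `n·E[Ψ^{(n)}] → 2p/(α(2α-1))` when `α > 1/2`. -/
theorem stmt_16 (α p : ℝ) (hα : 0 < α) (hp : 0 ≤ p) (hp1 : p ≤ 1) :
    (α ≠ 1 / 2 → ∀ n : ℕ, 2 ≤ n →
      EPsi α p n =
        (p / α) * ((2 - (2 * α + 1) * (2 * α * (n : ℝ) - 2 * α + 2) * b n (2 * α)) /
          (((n : ℝ) - 1) * (2 * α - 1)))) ∧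
    (1 / 2 < α → Tendsto (fun n : ℕ => (n : ℝ) * EPsi α p n) atTop
      (nhds (2 * p / (α * (2 * α - 1))))) := by
  constructor
  · intro hne n hn
    exact EPsi_closed p hα hne hn
  · intro hgt
    have hne : α ≠ 1 / 2 := ne_of_gt hgt
    have hx1 : 1 < 2 * α := by linarith
    have hα0 : α ≠ 0 := hα.ne'
    have hd : 2 * α - 1 ≠ 0 := by intro h; linarith [hgt]
    have hT1 : Tendsto (fun n : ℕ => (n : ℝ) / ((n : ℝ) - 1)) atTop (nhds 1) := by
      have h1 : Tendsto (fun n : ℕ => (n : ℝ) - 1) atTop atTop := by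
        have := tendsto_atTop_add_const_right atTop (-1 : ℝ) tendsto_natCast_atTop_atTop
        simpa [sub_eq_add_neg] using this
      have h2 : Tendsto (fun n : ℕ => 1 + ((n : ℝ) - 1)⁻¹) atTop (nhds 1) := by
        have := (tendsto_const_nhds (x := (1:ℝ)) (f := atTop (α := ℕ))).add
          h1.inv_tendsto_atTop
        simpa using this
      refine h2.congr' ?_
      filter_upwards [eventually_ge_atTop 2] with n hn
      have hn1 : ((n : ℝ) - 1) ≠ 0 := by
        have : (2:ℝ) ≤ (n:ℝ) := by exact_mod_cast hn
        intro h; linarith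
      field_simp
      ring
    have h0 : Tendsto (fun n : ℕ =>
        (2 * α * (n : ℝ) - 2 * α + 2) * b n (2 * α)) atTop (nhds 0) := by
      have ha : Tendsto (fun n : ℕ => 2 * α * ((n : ℝ) * b n (2 * α))) atTop (nhds 0) := by
        have := (tendsto_nb hx1).const_mul (2 * α); simpa using this
      have hb : Tendsto (fun n : ℕ => (2 - 2 * α) * b n (2 * α)) atTop (nhds 0) := by
        have := (tendsto_b (by linarith : (0:ℝ) < 2 * α)).const_mul (2 - 2 * α)
        simpa using this
      have := ha.add hb
      simp only [add_zero] at this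
      refine this.congr fun n => ?_
      ring
    have hT2 : Tendsto (fun n : ℕ =>
        (2 - (2 * α + 1) * ((2 * α * (n : ℝ) - 2 * α + 2) * b n (2 * α))) / (2 * α - 1))
        atTop (nhds (2 / (2 * α - 1))) := by
      have := ((tendsto_const_nhds (x := (2:ℝ)) (f := atTop (α := ℕ))).sub
        (h0.const_mul (2 * α + 1))).div_const (2 * α - 1)
      simpa using this
    have hfull := (hT1.mul hT2).const_mul (p / α)
    have hval : (p / α) * (1 * (2 / (2 * α - 1))) = 2 * p / (α * (2 * α - 1)) := by
      field_simp
    rw [hval] at hfull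
    refine hfull.congr' ?_
    filter_upwards [eventually_ge_atTop 2] with n hn
    rw [EPsi_closed p hα hne hn]
    have hn1 : ((n : ℝ) - 1) ≠ 0 := by
      have : (2:ℝ) ≤ (n:ℝ) := by exact_mod_cast hn
      intro h; linarith
    field_simp
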